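/- arXiv:1110.3198 — 2 statements merged into one kernel-verified Lean document; each statement's English description precedes it below -/
import Mathlib

section
/- Let r and k be integers with 1 ≤ k ≤ r. Then every 2r-regular graph has a 2k-factor, i.e., a spanning subgraph in which every vertex has degree exactly 2k. -/
open SimpleGraph

/-- The degree of a vertex `v` in the graph `G`. -/
noncomputable def gdeg {V : Type*} (G : SimpleGraph V) (v : V) : ℕ :=
  (G.neighborSet v).ncard

/-- `G` is `m`-edge-connected: it stays connected after deleting any set of
fewer than `m` edges (in particular, for `m ≥ 1`, `G` is connected). -/
def EdgeConn {V : Type*} (G : SimpleGraph V) (m : ℕ) : Prop :=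
  ∀ D : Finset (Sym2 V), D.card < m → (G.deleteEdges ↑D).Connected

/-- `e_G(S, T)`: the number of edges of `G` joining `S` to `T`. -/
noncomputable def eBetween {V : Type*} (G : SimpleGraph V) (S T : Set V) : ℕ :=
  {e ∈ G.edgeSet | ∃ u ∈ S, ∃ w ∈ T, e = s(u, w)}.ncard

/-- The vertex set (in `V`) of a connected component `C` of `G - A`
(the subgraph of `G` induced on the complement of `A`). -/
def compVerts {V : Type*} (G : SimpleGraph V) (A : Set V)
    (C : (G.induce Aᶜ).ConnectedComponent) : Set V :=
  Subtype.val '' C.supp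

/-- `τ(S,T)`: the number of components `C` of `G - (S ∪ T)` such that
`e_G(V(C), T) + f(V(C))` is odd. -/
noncomputable def tauCount {V : Type*} (G : SimpleGraph V) (f : V → ℕ) (S T : Set V) : ℕ :=
  {C : (G.induce (S ∪ T)ᶜ).ConnectedComponent |
    Odd (eBetween G (compVerts G (S ∪ T) C) T + ∑ᶠ v ∈ compVerts G (S ∪ T) C, f v)}.ncard

/-- `F` is a `(g, f)`-parity factor of `G`: a spanning subgraph with
`g v ≤ d_F v ≤ f v` and `d_F v ≡ f v (mod 2)` for all vertices `v`. -/
def IsParityFactor {V : Type*} (G F : SimpleGraph V) (g f : V → ℕ) : Prop :=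
  F ≤ G ∧ ∀ v, g v ≤ gdeg F v ∧ gdeg F v ≤ f v ∧ gdeg F v ≡ f v [MOD 2]


section PetersenDev

variable {V : Type*} [Fintype V] [DecidableEq V]

omit [DecidableEq V] in
lemma gdeg_eq_degree (G : SimpleGraph V) [DecidableRel G.Adj] (v : V) :
    gdeg G v = G.degree v := by
  rw [gdeg, degree, neighborFinset, Set.ncard_eq_toFinset_card']

omit [Fintype V] [DecidableEq V] in
lemma path_edges_start {G : SimpleGraph V} : ∀ {a x : V} (p : G.Walk a x), p.IsPath →
    ∀ e1 ∈ p.edges, ∀ e2 ∈ p.edges, a ∈ e1 → a ∈ e2 → e1 = e2 := by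
  intro a x p
  induction p with
  | nil => simp
  | cons h q ih =>
    rename_i u v w
    intro hp e1 he1 e2 he2 ha1 ha2
    rw [SimpleGraph.Walk.cons_isPath_iff] at hp
    have key : ∀ e ∈ (SimpleGraph.Walk.cons h q).edges, u ∈ e → e = s(u, v) := by
      intro e he hae
      rw [SimpleGraph.Walk.edges_cons, List.mem_cons] at he
      rcases he with rfl | he
      · rfl
      · exfalso
        obtain ⟨y, rfl⟩ := Sym2.mem_iff_exists.mp hae
        exact hp.2 (q.fst_mem_support_of_mem_edges he)
    rw [key e1 he1 ha1, key e2 he2 ha2]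

lemma exists_closed_trail (G : SimpleGraph V) [DecidableRel G.Adj]
    (heven : ∀ v, Even (G.degree v)) (hne : G.edgeSet.Nonempty) :
    ∃ (b : V) (c : G.Walk b b), c.IsTrail ∧ 0 < c.length := by
  obtain ⟨e, he⟩ := hne
  induction e with
  | h x y =>
  rw [mem_edgeSet] at he
  set S : Set ℕ := {n | ∃ u v : V, ∃ p : G.Walk u v, p.IsPath ∧ p.length = n} with hS
  have hbdd : BddAbove S := by
    refine ⟨Fintype.card V, fun n hn => ?_⟩
    obtain ⟨u, v, p, hp, rfl⟩ := hn
    exact le_of_lt hp.length_lt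
  have h1S : (1 : ℕ) ∈ S := by
    refine ⟨x, y, Walk.cons he Walk.nil, ?_, rfl⟩
    refine (Walk.cons_isPath_iff _ _).mpr ⟨Walk.IsPath.nil, ?_⟩
    simp [he.ne]
  have hNmem := Nat.sSup_mem ⟨1, h1S⟩ hbdd
  set N := sSup S with hN
  have h1N : 1 ≤ N := le_csSup hbdd h1S
  obtain ⟨a, b, p, hp, hlen⟩ := hNmem
  have hmax : ∀ (u v : V) (q : G.Walk u v), q.IsPath → q.length ≤ N := by
    intro u v q hq
    exact le_csSup hbdd ⟨u, v, q, hq, rfl⟩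
  -- all neighbors of b are on p
  have hnbsupp : ∀ w, G.Adj b w → w ∈ p.support := by
    intro w hw
    by_contra hns
    have hq : (Walk.cons hw.symm p.reverse).IsPath := by
      refine (Walk.cons_isPath_iff _ _).mpr ⟨(Walk.isPath_reverse_iff p).mpr hp, ?_⟩
      rw [Walk.support_reverse, List.mem_reverse]
      exact hns
    have := hmax _ _ _ hq
    rw [Walk.length_cons, Walk.length_reverse, hlen] at this
    omega
  -- b has a neighbor (last step of p)
  have hpnotnil : ¬ p.reverse.Nil := by
    rw [Walk.not_nil_iff_lt_length, Walk.length_reverse, hlen]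
    omega
  obtain ⟨v0, hadj0, q0, -⟩ := Walk.not_nil_iff.mp hpnotnil
  have hdeg2 : 2 ≤ G.degree b := by
    have h0 : 0 < G.degree b := by
      rw [← card_neighborFinset_eq_degree]
      exact Finset.card_pos.mpr ⟨v0, by simpa [mem_neighborFinset] using hadj0⟩
    obtain ⟨m, hm⟩ := heven b
    omega
  set B := (G.neighborFinset b).filter (fun w => s(b, w) ∈ p.edges) with hB
  have hBcard : B.card ≤ 1 := by
    refine Finset.card_le_one.mpr ?_
    intro w1 hw1 w2 hw2
    rw [hB, Finset.mem_filter] at hw1 hw2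
    have h1 : s(b, w1) ∈ p.reverse.edges := by rw [Walk.edges_reverse, List.mem_reverse]; exact hw1.2
    have h2 : s(b, w2) ∈ p.reverse.edges := by rw [Walk.edges_reverse, List.mem_reverse]; exact hw2.2
    have := path_edges_start p.reverse ((Walk.isPath_reverse_iff p).mpr hp) _ h1 _ h2
      (Sym2.mem_mk_left _ _) (Sym2.mem_mk_left _ _)
    exact (Sym2.congr_right.mp this)
  have hex : ∃ w ∈ G.neighborFinset b, w ∉ B := by
    by_contra hc
    push_neg at hc
    have : G.neighborFinset b ⊆ B := fun w hw => hc w hw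
    have := Finset.card_le_card this
    rw [card_neighborFinset_eq_degree] at this
    omega
  obtain ⟨w, hwnb, hwB⟩ := hex
  rw [mem_neighborFinset] at hwnb
  have hwedges : s(b, w) ∉ p.edges := by
    intro hmem
    exact hwB (by rw [hB, Finset.mem_filter]; exact ⟨by rwa [mem_neighborFinset], hmem⟩)
  have hwsupp : w ∈ p.support := hnbsupp w hwnb
  set q := p.dropUntil w hwsupp with hq
  have hqpath : q.IsPath := hp.dropUntil hwsupp
  have hqe : s(b, w) ∉ q.edges := fun hmem => hwedges (p.edges_dropUntil_subset hwsupp hmem)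
  refine ⟨b, Walk.cons hwnb q, ?_, ?_⟩
  · exact (Walk.isTrail_cons _ _).mpr ⟨hqpath.isTrail, hqe⟩
  · simp [Walk.length_cons]

lemma closed_support_count {G : SimpleGraph V} {b : V} (c : G.Walk b b) (v : V) :
    c.support.dropLast.count v = c.support.tail.count v := by
  have hsc := c.support_eq_cons
  have h2 : c.support.getLast? = some b := by
    rw [List.getLast?_eq_some_getLast c.support_ne_nil]
    exact congrArg some c.getLast_support
  have hmem : b ∈ c.support.getLast? := Option.mem_def.mpr h2
  have k1 : c.support.dropLast ++ [b] = c.support := List.dropLast_append_getLast? b hmem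
  have e1 : (c.support.dropLast ++ [b]).count v = c.support.count v := by rw [k1]
  have e2 : (b :: c.support.tail).count v = c.support.count v := by rw [← hsc]
  rw [List.count_append] at e1
  rw [List.count_cons] at e2
  by_cases hbv : b = v <;> simp [hbv, List.count_singleton, List.count_singleton'] at e1 e2 <;> omega

lemma darts_countP_eq {G : SimpleGraph V} {b : V} (c : G.Walk b b) (v : V) :
    c.darts.countP (fun d => d.toProd.1 = v) = c.darts.countP (fun d => d.toProd.2 = v) := by
  have h1 : c.darts.countP (fun d => d.toProd.1 = v) = (c.darts.map (·.fst)).count v := by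
    rw [List.count, List.countP_map]
    apply List.countP_congr
    intro d _
    simp [Function.comp]
  have h2 : c.darts.countP (fun d => d.toProd.2 = v) = (c.darts.map (·.snd)).count v := by
    rw [List.count, List.countP_map]
    apply List.countP_congr
    intro d _
    simp [Function.comp]
  rw [h1, h2, Walk.map_fst_darts, Walk.map_snd_darts, closed_support_count]

lemma countP_or_split {α : Type*} (l : List α) (p q : α → Bool)
    (h : ∀ a ∈ l, ¬(p a = true ∧ q a = true)) :
    l.countP (fun a => p a || q a) = l.countP p + l.countP q := by
  induction l with
  | nil => simp
  | cons a l ih =>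
    have ha := h a List.mem_cons_self
    rw [List.countP_cons, List.countP_cons, List.countP_cons,
      ih (fun x hx => h x (List.mem_cons_of_mem a hx))]
    by_cases hp : p a = true <;> by_cases hq : q a = true <;> simp [hp, hq] at ha ⊢ <;> omega

/-- Remove a list of edges from a graph. -/
def remEdges {V : Type*} (G : SimpleGraph V) (L : List (Sym2 V)) : SimpleGraph V where
  Adj x y := G.Adj x y ∧ s(x, y) ∉ L
  symm := ⟨fun x y h => ⟨h.1.symm, by rw [Sym2.eq_swap]; exact h.2⟩⟩
  loopless := ⟨fun x h => G.loopless.irrefl x h.1⟩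

omit [Fintype V] [DecidableEq V] in
@[simp] lemma remEdges_adj {G : SimpleGraph V} {L : List (Sym2 V)} {x y : V} :
    (remEdges G L).Adj x y ↔ G.Adj x y ∧ s(x, y) ∉ L := Iff.rfl

instance remEdges_decAdj {G : SimpleGraph V} [DecidableRel G.Adj] (L : List (Sym2 V)) :
    DecidableRel (remEdges G L).Adj :=
  fun x y => inferInstanceAs (Decidable (G.Adj x y ∧ s(x, y) ∉ L))

lemma exists_orientation : ∀ (n : ℕ) (G : SimpleGraph V),
    G.edgeSet.ncard ≤ n → (∀ v, Even (gdeg G v)) →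
    ∃ O : Finset (V × V),
      (∀ p ∈ O, G.Adj p.1 p.2) ∧
      (∀ u w, G.Adj u w → ((u, w) ∈ O ↔ (w, u) ∉ O)) ∧
      (∀ v, (O.filter (fun p => p.1 = v)).card = (O.filter (fun p => p.2 = v)).card) := by
  intro n
  induction n with
  | zero =>
    intro G hcard _
    have hE : G.edgeSet = ∅ := by
      rw [← Set.ncard_eq_zero (G.edgeSet.toFinite)]
      omega
    refine ⟨∅, by simp, ?_, by simp⟩
    intro u w hadj
    exact absurd (G.mem_edgeSet.mpr hadj) (by simp [hE])
  | succ n IH =>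
    intro G hcard heven
    by_cases hne : G.edgeSet.Nonempty
    swap
    · refine ⟨∅, by simp, ?_, by simp⟩
      intro u w hadj
      exact (hne ⟨s(u, w), G.mem_edgeSet.mpr hadj⟩).elim
    classical
    letI instG : DecidableRel G.Adj := Classical.decRel _
    have hevend : ∀ v, Even (G.degree v) := by
      intro v; rw [← gdeg_eq_degree]; exact heven v
    obtain ⟨b, c, hct, hclen⟩ := exists_closed_trail G hevend hne
    set G' := remEdges G c.edges with hG'
    have hle : G' ≤ G := fun _ _ h => h.1
    have hedgesdarts : c.edges = c.darts.map SimpleGraph.Dart.edge := rfl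
    have hnotmem : ∀ e ∈ c.edges, e ∉ G'.edgeSet := by
      intro e he
      induction e with
      | h x y =>
        rw [mem_edgeSet]
        exact fun hadj => hadj.2 he
    -- edge count decreases
    have hene : c.edges ≠ [] := by
      have := c.length_edges
      intro h
      rw [h] at this
      simp at this
      omega
    have he0 : c.edges.head hene ∈ c.edges := List.head_mem hene
    have hssub : G'.edgeSet ⊂ G.edgeSet := by
      refine (Set.ssubset_iff_of_subset (edgeSet_mono hle)).mpr
        ⟨c.edges.head hene, c.edges_subset_edgeSet he0, hnotmem _ he0⟩
    have hcard' : G'.edgeSet.ncard ≤ n := by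
      have := Set.ncard_lt_ncard hssub (G.edgeSet.toFinite)
      omega
    -- degrees stay even
    have heven' : ∀ v, Even (gdeg G' v) := by
      intro v
      rw [gdeg_eq_degree]
      have hnb : G'.neighborFinset v
          = (G.neighborFinset v).filter (fun w => ¬ s(v, w) ∈ c.edges) := by
        ext w
        simp [mem_neighborFinset, hG']
      have hsplit := Finset.card_filter_add_card_filter_not
        (s := G.neighborFinset v) (p := fun w => s(v, w) ∈ c.edges)
      rw [card_neighborFinset_eq_degree] at hsplit
      have hdeg' : G'.degree v = ((G.neighborFinset v).filter
          (fun w => ¬ s(v, w) ∈ c.edges)).card := by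
        rw [← card_neighborFinset_eq_degree, hnb]
      set Rem := (G.neighborFinset v).filter (fun w => s(v, w) ∈ c.edges) with hRem
      -- Rem.card = number of edges of c containing v
      have hRemcard : Rem.card = c.edges.countP (fun e => v ∈ e) := by
        rw [List.countP_eq_length_filter,
          ← List.toFinset_card_of_nodup (hct.edges_nodup.filter _)]
        apply Finset.card_bij (fun w _ => s(v, w))
        · intro w hw
          rw [hRem, Finset.mem_filter] at hw
          simp only [List.mem_toFinset, List.mem_filter]
          exact ⟨hw.2, by simp⟩
        · intro w1 h1 w2 h2 heq
          exact Sym2.congr_right.mp heq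
        · intro e he
          simp only [List.mem_toFinset, List.mem_filter, decide_eq_true_eq] at he
          obtain ⟨w, rfl⟩ := Sym2.mem_iff_exists.mp he.2
          refine ⟨w, ?_, rfl⟩
          rw [hRem, Finset.mem_filter, mem_neighborFinset]
          exact ⟨G.mem_edgeSet.mp (c.edges_subset_edgeSet he.1), he.1⟩
      have hcount2 : c.edges.countP (fun e => v ∈ e)
          = 2 * c.darts.countP (fun d => d.toProd.1 = v) := by
        rw [hedgesdarts, List.countP_map]
        have hstep : c.darts.countP ((fun e => decide (v ∈ e)) ∘ SimpleGraph.Dart.edge)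
            = c.darts.countP (fun d => decide (d.toProd.1 = v) || decide (d.toProd.2 = v)) := by
          apply List.countP_congr
          intro d _
          have hiff : v ∈ d.edge ↔ d.toProd.1 = v ∨ d.toProd.2 = v := by
            show v ∈ s(d.toProd.1, d.toProd.2) ↔ _
            rw [Sym2.mem_iff]
            constructor
            · rintro (rfl | rfl)
              · exact Or.inl rfl
              · exact Or.inr rfl
            · rintro (rfl | rfl)
              · exact Or.inl rfl
              · exact Or.inr rfl
          simp only [Function.comp_apply]
          rw [decide_eq_decide.mpr hiff, Bool.decide_or]
        rw [hstep, countP_or_split _ _ _ (fun d _ hboth => by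
          have h1 := of_decide_eq_true hboth.1
          have h2 := of_decide_eq_true hboth.2
          exact d.fst_ne_snd (h1.trans h2.symm)),
          ← darts_countP_eq c v]
        omega
      have hRemEven : Even Rem.card := by
        rw [hRemcard, hcount2]; exact even_two_mul _
      have hGEven : Even (G.degree v) := hevend v
      rw [hdeg']
      rw [← hsplit] at hGEven
      rcases hRemEven with ⟨m, hm⟩
      rcases hGEven with ⟨M, hM⟩
      exact ⟨M - m, by omega⟩
    obtain ⟨O', hO1, hO2, hO3⟩ := IH G' hcard' heven'
    -- darts of c as a finset of pairs
    have hdartsnd : c.darts.Nodup := by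
      have := hct.edges_nodup
      rw [hedgesdarts] at this
      exact this.of_map _
    set l := c.darts.map SimpleGraph.Dart.toProd with hl
    have hlnd : l.Nodup := hdartsnd.map SimpleGraph.Dart.toProd_injective
    set D := l.toFinset with hD
    have hmemD : ∀ p : V × V, p ∈ D ↔ ∃ d ∈ c.darts, d.toProd = p := by
      intro p; rw [hD, List.mem_toFinset, hl, List.mem_map]
    have hD1 : ∀ p ∈ D, G.Adj p.1 p.2 ∧ s(p.1, p.2) ∈ c.edges := by
      intro p hp
      obtain ⟨d, hd, rfl⟩ := (hmemD p).mp hp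
      refine ⟨d.adj, ?_⟩
      rw [hedgesdarts]
      exact List.mem_map_of_mem hd
    have hDboth : ∀ u w, (u, w) ∈ D → (w, u) ∈ D → False := by
      intro u w h1 h2
      obtain ⟨d1, hd1, he1⟩ := (hmemD _).mp h1
      obtain ⟨d2, hd2, he2⟩ := (hmemD _).mp h2
      have hadj1 := d1.adj
      rw [he1] at hadj1
      have hne' : u ≠ w := G.ne_of_adj hadj1
      have hedge : d1.edge = d2.edge := by
        rw [Dart.edge, Dart.edge]
        rw [he1, he2]
        exact Sym2.eq_swap
      have hdd : d1 = d2 := List.inj_on_of_nodup_map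
        (by rw [← hedgesdarts]; exact hct.edges_nodup) hd1 hd2 hedge
      rw [hdd, he2] at he1
      exact hne' (congrArg Prod.snd he1)
    have hDexist : ∀ u w, s(u, w) ∈ c.edges → (u, w) ∈ D ∨ (w, u) ∈ D := by
      intro u w hmem
      rw [hedgesdarts, List.mem_map] at hmem
      obtain ⟨d, hd, hde⟩ := hmem
      have h2 : s(d.toProd.1, d.toProd.2) = s(u, w) := hde
      rw [Sym2.eq_iff] at h2
      rcases h2 with ⟨h3, h4⟩ | ⟨h3, h4⟩
      · exact Or.inl ((hmemD _).mpr ⟨d, hd, Prod.ext h3 h4⟩)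
      · exact Or.inr ((hmemD _).mpr ⟨d, hd, Prod.ext h3 h4⟩)
    have hDnot : ∀ u w, s(u, w) ∉ c.edges → (u, w) ∉ D := by
      intro u w hnm hin
      exact hnm (hD1 _ hin).2
    have hO'c : ∀ p ∈ O', s(p.1, p.2) ∉ c.edges := by
      intro p hp
      exact (hO1 p hp).2
    have hdisj : Disjoint O' D := by
      rw [Finset.disjoint_left]
      intro p hpO hpD
      exact hO'c p hpO (hD1 p hpD).2
    refine ⟨O' ∪ D, ?_, ?_, ?_⟩
    · intro p hp
      rcases Finset.mem_union.mp hp with h | h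
      · exact (hO1 p h).1
      · exact (hD1 p h).1
    · intro u w hadj
      by_cases hin : s(u, w) ∈ c.edges
      · have hin' : s(w, u) ∈ c.edges := by rwa [Sym2.eq_swap]
        have h1 : (u, w) ∉ O' := fun h => hO'c _ h hin
        have h2 : (w, u) ∉ O' := fun h => hO'c _ h hin'
        simp only [Finset.mem_union]
        constructor
        · intro hmem hmem2
          rcases hmem2 with h | h
          · exact h2 h
          · rcases hmem with h' | h'
            · exact h1 h'
            · exact hDboth u w h' h
        · intro hnm
          rcases hDexist u w hin with h | h
          · exact Or.inr h
          · exact absurd (Or.inr h) hnm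
      · have hG'adj : G'.Adj u w := ⟨hadj, hin⟩
        have hin' : s(w, u) ∉ c.edges := by rwa [Sym2.eq_swap]
        have h1 : (u, w) ∉ D := hDnot u w hin
        have h2 : (w, u) ∉ D := hDnot w u hin'
        have hiff := hO2 u w hG'adj
        simp only [Finset.mem_union]
        constructor
        · rintro (h | h) hmem
          · rcases hmem with h' | h'
            · exact (hiff.mp h) h'
            · exact h2 h'
          · exact h1 h
        · intro hnm
          left
          apply hiff.mpr
          intro h'
          exact hnm (Or.inl h')
    · intro v
      have hDf1 : (D.filter (fun p => p.1 = v)).card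
          = c.darts.countP (fun d => d.toProd.1 = v) := by
        have hst : (D.filter (fun p => p.1 = v))
            = (l.filter (fun p => p.1 = v)).toFinset := by
          ext p
          simp [hD, Finset.mem_filter, List.mem_toFinset, List.mem_filter]
        rw [hst, List.toFinset_card_of_nodup (hlnd.filter _),
          ← List.countP_eq_length_filter, hl, List.countP_map]
        rfl
      have hDf2 : (D.filter (fun p => p.2 = v)).card
          = c.darts.countP (fun d => d.toProd.2 = v) := by
        have hst : (D.filter (fun p => p.2 = v))
            = (l.filter (fun p => p.2 = v)).toFinset := by
          ext p
          simp [hD, Finset.mem_filter, List.mem_toFinset, List.mem_filter]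
        rw [hst, List.toFinset_card_of_nodup (hlnd.filter _),
          ← List.countP_eq_length_filter, hl, List.countP_map]
        rfl
      rw [Finset.filter_union, Finset.filter_union,
        Finset.card_union_of_disjoint
          (hdisj.mono (Finset.filter_subset _ _) (Finset.filter_subset _ _)),
        Finset.card_union_of_disjoint
          (hdisj.mono (Finset.filter_subset _ _) (Finset.filter_subset _ _)),
        hO3 v, hDf1, hDf2, darts_countP_eq]

lemma exists_two_factor (G : SimpleGraph V) (r : ℕ) (hr : 1 ≤ r)
    (hreg : ∀ v, gdeg G v = 2 * r) :
    ∃ F : SimpleGraph V, F ≤ G ∧ (∀ v, gdeg F v = 2) := by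
  classical
  letI : DecidableRel G.Adj := Classical.decRel _
  have heven : ∀ v, Even (gdeg G v) := fun v => by rw [hreg v]; exact even_two_mul r
  obtain ⟨O, hO1, hO2, hO3⟩ := exists_orientation G.edgeSet.ncard G le_rfl heven
  -- out-degree + in-degree = degree
  have hsum : ∀ v, (O.filter (fun p => p.1 = v)).card + (O.filter (fun p => p.2 = v)).card
      = G.degree v := by
    intro v
    set A := (O.filter (fun p => p.1 = v)).image Prod.snd with hA
    set B := (O.filter (fun p => p.2 = v)).image Prod.fst with hB
    have hcA : A.card = (O.filter (fun p => p.1 = v)).card := by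
      apply Finset.card_image_of_injOn
      intro p1 h1 p2 h2 heq
      simp only [Finset.mem_coe, Finset.mem_filter] at h1 h2
      exact Prod.ext (h1.2.trans h2.2.symm) heq
    have hcB : B.card = (O.filter (fun p => p.2 = v)).card := by
      apply Finset.card_image_of_injOn
      intro p1 h1 p2 h2 heq
      simp only [Finset.mem_coe, Finset.mem_filter] at h1 h2
      exact Prod.ext heq (h1.2.trans h2.2.symm)
    have hmemA : ∀ w, w ∈ A ↔ (v, w) ∈ O := by
      intro w
      rw [hA, Finset.mem_image]
      constructor
      · rintro ⟨p, hp, rfl⟩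
        rw [Finset.mem_filter] at hp
        rcases hp with ⟨hpO, hp1⟩
        rwa [show p = (v, p.2) from Prod.ext hp1 rfl] at hpO
      · intro h
        exact ⟨(v, w), Finset.mem_filter.mpr ⟨h, rfl⟩, rfl⟩
    have hmemB : ∀ w, w ∈ B ↔ (w, v) ∈ O := by
      intro w
      rw [hB, Finset.mem_image]
      constructor
      · rintro ⟨p, hp, rfl⟩
        rw [Finset.mem_filter] at hp
        rcases hp with ⟨hpO, hp1⟩
        rwa [show p = (p.1, v) from Prod.ext rfl hp1] at hpO
      · intro h
        exact ⟨(w, v), Finset.mem_filter.mpr ⟨h, rfl⟩, rfl⟩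
    have hdisj : Disjoint A B := by
      rw [Finset.disjoint_left]
      intro w hwA hwB
      have h1 := (hmemA w).mp hwA
      have h2 := (hmemB w).mp hwB
      exact ((hO2 v w (hO1 _ h1)).mp h1) h2
    have hunion : A ∪ B = G.neighborFinset v := by
      ext w
      rw [Finset.mem_union, mem_neighborFinset, hmemA, hmemB]
      constructor
      · rintro (h | h)
        · exact hO1 _ h
        · exact (hO1 _ h).symm
      · intro hadj
        by_cases h : (v, w) ∈ O
        · exact Or.inl h
        · right
          by_contra h2
          exact h ((hO2 v w hadj).mpr h2)
    rw [← hcA, ← hcB, ← Finset.card_union_of_disjoint hdisj, hunion,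
      card_neighborFinset_eq_degree]
  have hout : ∀ v, (O.filter (fun p => p.1 = v)).card = r := by
    intro v
    have h1 := hsum v
    have h2 := hO3 v
    have h3 : G.degree v = 2 * r := by rw [← gdeg_eq_degree, hreg]
    omega
  -- Hall's condition
  set t : V → Finset V := fun v => (O.filter (fun p => p.1 = v)).image Prod.snd with ht
  have hall : ∀ s : Finset V, s.card ≤ (s.biUnion t).card := by
    intro s
    set T := s.biUnion t with hT
    set P := O.filter (fun p => p.1 ∈ s) with hP
    have hP1 : P.card = s.card * r := by
      rw [Finset.card_eq_sum_card_fiberwise (f := Prod.fst) (s := P) (t := s)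
        (fun p hp => (Finset.mem_filter.mp hp).2)]
      have : ∀ v ∈ s, (P.filter (fun p => p.1 = v)).card = r := by
        intro v hv
        rw [← hout v]
        congr 1
        ext p
        rw [hP, Finset.mem_filter, Finset.mem_filter, Finset.mem_filter]
        constructor
        · rintro ⟨⟨h1, _⟩, h3⟩; exact ⟨h1, h3⟩
        · rintro ⟨h1, h3⟩; exact ⟨⟨h1, h3 ▸ hv⟩, h3⟩
      rw [Finset.sum_congr rfl this, Finset.sum_const, smul_eq_mul]
    have hP2 : P.card ≤ T.card * r := by
      rw [Finset.card_eq_sum_card_fiberwise (f := Prod.snd) (s := P) (t := T) ?_]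
      · apply le_trans (Finset.sum_le_sum (g := fun _ => r) ?_)
        · rw [Finset.sum_const, smul_eq_mul]
        · intro w _
          have hsub : P.filter (fun p => p.2 = w) ⊆ O.filter (fun p => p.2 = w) := by
            apply Finset.filter_subset_filter
            rw [hP]; exact Finset.filter_subset _ _
          calc (P.filter (fun p => p.2 = w)).card
              ≤ (O.filter (fun p => p.2 = w)).card := Finset.card_le_card hsub
            _ = (O.filter (fun p => p.1 = w)).card := (hO3 w).symm
            _ = r := hout w
      · intro p hp
        rw [Finset.mem_coe, hP, Finset.mem_filter] at hp
        rw [hT]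
        apply Finset.mem_biUnion.mpr
        refine ⟨p.1, hp.2, ?_⟩
        rw [ht]
        exact Finset.mem_image.mpr ⟨p, Finset.mem_filter.mpr ⟨hp.1, rfl⟩, rfl⟩
    have := hP1 ▸ hP2
    exact Nat.le_of_mul_le_mul_right this (by omega)
  obtain ⟨f, hfinj, hf⟩ := (Finset.all_card_le_biUnion_card_iff_existsInjective' t).mp hall
  have hfO : ∀ v, (v, f v) ∈ O := by
    intro v
    have := hf v
    rw [ht] at this
    obtain ⟨p, hp, hp2⟩ := Finset.mem_image.mp this
    rw [Finset.mem_filter] at hp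
    rw [show (v, f v) = p from Prod.ext hp.2.symm hp2.symm]
    exact hp.1
  have hAdj : ∀ v, G.Adj v (f v) := fun v => hO1 _ (hfO v)
  have hsurj : Function.Surjective f := Finite.injective_iff_surjective.mp hfinj
  set F : SimpleGraph V := {
    Adj := fun x y => f x = y ∨ f y = x
    symm := ⟨fun x y h => Or.symm h⟩
    loopless := ⟨fun x h => by
      have hfx : f x = x := by rcases h with h | h <;> exact h
      have := hAdj x
      rw [hfx] at this
      exact G.loopless.irrefl x this⟩ } with hF
  have hFle : F ≤ G := by
    intro x y h
    rcases h with h | h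
    · exact h ▸ hAdj x
    · exact (h ▸ hAdj y).symm
  refine ⟨F, hFle, ?_⟩
  intro v
  obtain ⟨y0, hy0⟩ := hsurj v
  have hset : F.neighborSet v = {f v, y0} := by
    ext w
    simp only [mem_neighborSet, Set.mem_insert_iff, Set.mem_singleton_iff]
    constructor
    · intro h
      rcases h with h | h
      · exact Or.inl h.symm
      · exact Or.inr (hfinj (h.trans hy0.symm))
    · rintro (rfl | rfl)
      · exact Or.inl rfl
      · exact Or.inr hy0
  have hne2 : f v ≠ y0 := by
    intro heq
    have h1 := hfO v
    have h2 := hfO y0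
    rw [hy0, ← heq] at h2
    exact ((hO2 v (f v) (hAdj v)).mp h1) h2
  rw [gdeg, hset, Set.ncard_pair hne2]

lemma petersen_aux : ∀ (r k : ℕ), 1 ≤ k → k ≤ r → ∀ G : SimpleGraph V,
    (∀ v, gdeg G v = 2 * r) → ∃ H : SimpleGraph V, H ≤ G ∧ ∀ v, gdeg H v = 2 * k := by
  intro r
  induction r with
  | zero => intro k hk hkr; omega
  | succ r IH =>
    intro k hk hkr G hreg
    by_cases hk' : k = r + 1
    · subst hk'; exact ⟨G, le_rfl, hreg⟩
    · have hkr' : k ≤ r := by omega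
      obtain ⟨F, hFle, hFdeg⟩ := exists_two_factor G (r+1) (by omega) hreg
      set G2 : SimpleGraph V := {
        Adj := fun x y => G.Adj x y ∧ ¬ F.Adj x y
        symm := ⟨fun x y h => ⟨h.1.symm, fun h2 => h.2 h2.symm⟩⟩
        loopless := ⟨fun x h => G.loopless.irrefl x h.1⟩ } with hG2
      have hG2le : G2 ≤ G := fun x y h => h.1
      have hG2deg : ∀ v, gdeg G2 v = 2 * r := by
        intro v
        have hsub : F.neighborSet v ⊆ G.neighborSet v := fun w hw => hFle hw
        have hset : G2.neighborSet v = G.neighborSet v \ F.neighborSet v := by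
          ext w
          simp only [mem_neighborSet, Set.mem_diff]
          exact Iff.rfl
        rw [gdeg, hset, Set.ncard_diff hsub]
        have h1 := hreg v
        have h2 := hFdeg v
        rw [gdeg] at h1 h2
        omega
      obtain ⟨H, hHle, hHdeg⟩ := IH k hk hkr' G2 hG2deg
      exact ⟨H, le_trans hHle hG2le, hHdeg⟩

end PetersenDev

/-- Petersen: every 2r-regular graph has a 2k-factor, for 1 ≤ k ≤ r. -/
theorem petersen_two_k_factor (r k : ℕ) (hk : 1 ≤ k) (hkr : k ≤ r)
    {V : Type*} [Fintype V] (G : SimpleGraph V)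
    (hreg : ∀ v, gdeg G v = 2 * r) :
    ∃ H : SimpleGraph V, H ≤ G ∧ ∀ v, gdeg H v = 2 * k := by
  classical
  exact petersen_aux r k hk hkr G hreg
end

section
/- Let G be a graph and let g, f : V(G) → Z⁺ satisfy g(v) ≤ f(v) and g(v) ≡ f(v) (mod 2) for every vertex v. Then for all disjoint subsets S, T of V(G), the quantity δ(S,T) := f(S) + Σ_{x∈T} d_G(x) − g(T) − e_G(S,T) − τ(S,T) satisfies δ(S,T) ≡ f(V(G)) (mod 2), where τ(S,T) is the number of components C of G − (S ∪ T) with e_G(V(C),T) + f(V(C)) odd. -/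
open SimpleGraph

open scoped Classical

set_option linter.unusedSectionVars false
set_option maxHeartbeats 1000000

section Helpers
variable {V : Type*} [Fintype V]

private lemma natCast_zmod_two (n : ℕ) : (n : ZMod 2) = if Odd n then 1 else 0 := by
  have h2 : (2 : ZMod 2) = 0 := by decide
  have key : (n : ZMod 2) = ((n % 2 : ℕ) : ZMod 2) := by
    conv_lhs => rw [← Nat.mod_add_div n 2]
    push_cast
    rw [h2]; ring
  rw [key]
  rcases Nat.mod_two_eq_zero_or_one n with h | h <;> simp [h, Nat.odd_iff]

/-- cast a `ℕ`-valued `finsum` over a set into `ZMod 2`. -/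
private lemma cast_finsum_mem (s : Set V) (p : V → ℕ) :
    ((∑ᶠ v ∈ s, p v : ℕ) : ZMod 2) = ∑ᶠ v ∈ s, ((p v : ZMod 2)) := by
  classical
  rw [finsum_mem_eq_finite_toFinset_sum _ (Set.toFinite s),
      finsum_mem_eq_finite_toFinset_sum _ (Set.toFinite s), Nat.cast_sum]

private lemma cast_finsum {ι : Type*} [Finite ι] (p : ι → ℕ) :
    ((∑ᶠ i : ι, p i : ℕ) : ZMod 2) = ∑ᶠ i : ι, ((p i : ZMod 2)) := by
  haveI := Fintype.ofFinite ι
  rw [finsum_eq_sum_of_fintype, finsum_eq_sum_of_fintype, Nat.cast_sum]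

private lemma int_cast_finsum_mem (s : Set V) (p : V → ℕ) :
    (((∑ᶠ v ∈ s, (p v : ℤ)) : ℤ) : ZMod 2) = ∑ᶠ v ∈ s, ((p v : ZMod 2)) := by
  classical
  rw [finsum_mem_eq_finite_toFinset_sum _ (Set.toFinite s),
      finsum_mem_eq_finite_toFinset_sum _ (Set.toFinite s)]
  push_cast
  rfl

private lemma card_odd_filter {α : Type*} [Finite α] (p : α → ℕ) :
    (({a : α | Odd (p a)}.ncard : ZMod 2)) = ∑ᶠ a : α, (p a : ZMod 2) := by
  haveI := Fintype.ofFinite α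
  classical
  rw [finsum_eq_sum_of_fintype, Set.ncard_eq_toFinset_card', Set.toFinset_setOf,
    Finset.card_filter]
  push_cast
  exact Finset.sum_congr rfl fun a _ => (natCast_zmod_two (p a)).symm

private lemma pairs_card_eq_eBetween (G : SimpleGraph V) {A B : Set V} (h : Disjoint A B) :
    {p : V × V | p.1 ∈ A ∧ p.2 ∈ B ∧ G.Adj p.1 p.2}.ncard = eBetween G A B := by
  classical
  rw [eBetween, Set.ncard_eq_toFinset_card', Set.ncard_eq_toFinset_card']
  refine Finset.card_bij (fun p _ => s(p.1, p.2)) ?_ ?_ ?_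
  · intro p hp
    simp only [Set.mem_toFinset, Set.mem_setOf_eq] at hp ⊢
    exact ⟨(SimpleGraph.mem_edgeSet G).mpr hp.2.2, p.1, hp.1, p.2, hp.2.1, rfl⟩
  · intro p hp q hq hpq
    simp only [Set.mem_toFinset, Set.mem_setOf_eq] at hp hq
    rw [Sym2.eq_iff] at hpq
    rcases hpq with ⟨h1, h2⟩ | ⟨h1, h2⟩
    · exact Prod.ext h1 h2
    · exact ((Set.disjoint_left.mp h hp.1) (h1 ▸ hq.2.1)).elim
  · intro e he
    simp only [Set.mem_toFinset, Set.mem_setOf_eq] at he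
    obtain ⟨he1, u, hu, w, hw, rfl⟩ := he
    refine ⟨(u, w), ?_, rfl⟩
    simp only [Set.mem_toFinset, Set.mem_setOf_eq]
    exact ⟨hu, hw, (SimpleGraph.mem_edgeSet G).mp he1⟩

private lemma sum_n_eq_pairs (G : SimpleGraph V) (A B : Set V) :
    ∑ᶠ x ∈ A, {y | y ∈ B ∧ G.Adj x y}.ncard
      = {p : V × V | p.1 ∈ A ∧ p.2 ∈ B ∧ G.Adj p.1 p.2}.ncard := by
  classical
  rw [finsum_mem_eq_finite_toFinset_sum _ (Set.toFinite A), Set.ncard_eq_toFinset_card']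
  have hsets : ∀ x : V, ({y | y ∈ B ∧ G.Adj x y}).ncard
      = (B.toFinset.filter (G.Adj x)).card := by
    intro x
    rw [Set.ncard_eq_toFinset_card']
    congr 1
    ext y
    simp [Set.mem_toFinset]
  have hpairs : ({p : V × V | p.1 ∈ A ∧ p.2 ∈ B ∧ G.Adj p.1 p.2}).toFinset
      = (A.toFinset ×ˢ B.toFinset).filter fun p : V × V => G.Adj p.1 p.2 := by
    ext p
    simp only [Set.mem_toFinset, Set.mem_setOf_eq, Finset.mem_filter, Finset.mem_product,
      Set.mem_toFinset]
    tauto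
  rw [hpairs]
  simp only [hsets, Set.Finite.toFinset_eq_toFinset]
  -- now : ∑ x ∈ A.toFinset, (B.toFinset.filter (G.Adj x)).card = card of filtered product
  rw [Finset.card_eq_sum_card_fiberwise (f := Prod.fst) (t := A.toFinset)
    (fun p hp => by simp only [Finset.mem_coe, Finset.mem_filter, Finset.mem_product] at hp; exact hp.1.1)]
  refine Finset.sum_congr rfl fun x hx => ?_
  have hfib : (((A.toFinset ×ˢ B.toFinset).filter fun p : V × V => G.Adj p.1 p.2).filter
        fun p => p.1 = x)
      = (B.toFinset.filter (G.Adj x)).map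
          ⟨fun y => (x, y), fun a b hab => (Prod.ext_iff.mp hab).2⟩ := by
    ext ⟨a, b⟩
    simp only [Finset.mem_filter, Finset.mem_product, Finset.mem_map,
      Function.Embedding.coeFn_mk, Prod.mk.injEq]
    show _ ↔ ∃ y, _ ∧ (x, y) = (a, b); simp only [Prod.mk.injEq]
    constructor
    · rintro ⟨⟨⟨_, hb⟩, hP⟩, rfl⟩
      exact ⟨b, ⟨hb, hP⟩, rfl, rfl⟩
    · rintro ⟨y, ⟨hy, hP⟩, rfl, rfl⟩
      exact ⟨⟨⟨hx, hy⟩, hP⟩, rfl⟩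
  rw [hfib, Finset.card_map]

private lemma diag_zero (G : SimpleGraph V) (T : Set V) :
    (({p : V × V | p.1 ∈ T ∧ p.2 ∈ T ∧ G.Adj p.1 p.2}.ncard : ℕ) : ZMod 2) = 0 := by
  classical
  rw [Set.ncard_eq_toFinset_card']
  have key : ((({p : V × V | p.1 ∈ T ∧ p.2 ∈ T ∧ G.Adj p.1 p.2}.toFinset.card : ℕ)) : ZMod 2)
      = ∑ _p ∈ {p : V × V | p.1 ∈ T ∧ p.2 ∈ T ∧ G.Adj p.1 p.2}.toFinset,
          (1 : ZMod 2) := by simp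
  rw [key]
  refine Finset.sum_involution (fun p _ => p.swap) (fun p hp => by decide) ?_ ?_ ?_
  · intro p hp _ hsw
    simp only [Set.mem_toFinset, Set.mem_setOf_eq] at hp
    exact hp.2.2.ne ((Prod.ext_iff.mp hsw).2.symm ▸ rfl)
  · intro p hp
    simp only [Set.mem_toFinset, Set.mem_setOf_eq] at hp ⊢
    exact ⟨hp.2.1, hp.1, hp.2.2.symm⟩
  · intro p hp; simp

private lemma eBetween_comm (G : SimpleGraph V) (A B : Set V) :
    eBetween G A B = eBetween G B A := by
  unfold eBetween
  congr 1
  ext e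
  simp only [Set.mem_setOf_eq]
  constructor <;> rintro ⟨he, u, hu, w, hw, rfl⟩
  · exact ⟨he, w, hw, u, hu, Sym2.eq_swap⟩
  · exact ⟨he, w, hw, u, hu, Sym2.eq_swap⟩

private lemma gdeg_split (G : SimpleGraph V) (x : V) (S T : Set V) (hST : Disjoint S T) :
    gdeg G x = {y | y ∈ T ∧ G.Adj x y}.ncard
      + ({y | y ∈ S ∧ G.Adj x y}.ncard + {y | y ∈ (S ∪ T)ᶜ ∧ G.Adj x y}.ncard) := by
  have hsplit : G.neighborSet x
      = {y | y ∈ T ∧ G.Adj x y}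
        ∪ ({y | y ∈ S ∧ G.Adj x y} ∪ {y | y ∈ (S ∪ T)ᶜ ∧ G.Adj x y}) := by
    ext y
    simp only [SimpleGraph.mem_neighborSet, Set.mem_union, Set.mem_setOf_eq, Set.mem_compl_iff]
    tauto
  have d1 : Disjoint ({y | y ∈ S ∧ G.Adj x y}) ({y | y ∈ (S ∪ T)ᶜ ∧ G.Adj x y}) :=
    Set.disjoint_left.mpr fun y hy hy' => hy'.1 (Or.inl hy.1)
  have d2 : Disjoint ({y | y ∈ T ∧ G.Adj x y})
      ({y | y ∈ S ∧ G.Adj x y} ∪ {y | y ∈ (S ∪ T)ᶜ ∧ G.Adj x y}) := by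
    rw [Set.disjoint_union_right]
    exact ⟨Set.disjoint_left.mpr fun y hy hy' => Set.disjoint_left.mp hST hy'.1 hy.1,
      Set.disjoint_left.mpr fun y hy hy' => hy'.1 (Or.inr hy.1)⟩
  rw [gdeg, hsplit, Set.ncard_union_eq d2, Set.ncard_union_eq d1]

variable (G : SimpleGraph V) (A : Set V)

private lemma compVerts_subset (C : (G.induce Aᶜ).ConnectedComponent) :
    compVerts G A C ⊆ Aᶜ := by
  rintro v ⟨x, hx, rfl⟩; exact x.2

private lemma compVerts_eq_of_mem {C D : (G.induce Aᶜ).ConnectedComponent} {v : V}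
    (h : v ∈ compVerts G A C) (h' : v ∈ compVerts G A D) : C = D := by
  obtain ⟨x, hx, rfl⟩ := h
  obtain ⟨y, hy, hxy⟩ := h'
  have hyx : y = x := Subtype.ext hxy
  subst hyx
  rw [SimpleGraph.ConnectedComponent.mem_supp_iff] at hx hy
  rw [← hx, ← hy]

private lemma mem_compVerts_mk {v : V} (hv : v ∈ Aᶜ) :
    v ∈ compVerts G A ((G.induce Aᶜ).connectedComponentMk ⟨v, hv⟩) :=
  ⟨⟨v, hv⟩, by rw [SimpleGraph.ConnectedComponent.mem_supp_iff], rfl⟩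

private lemma sum_compVerts_f (f : V → ℕ) :
    ∑ᶠ C : (G.induce Aᶜ).ConnectedComponent, ∑ᶠ v ∈ compVerts G A C, f v
      = ∑ᶠ v ∈ (Aᶜ : Set V), f v := by
  classical
  haveI := Fintype.ofFinite ((G.induce Aᶜ).ConnectedComponent)
  rw [finsum_eq_sum_of_fintype, finsum_mem_eq_finite_toFinset_sum _ (Set.toFinite _)]
  have hterm : ∀ C : (G.induce Aᶜ).ConnectedComponent,
      ∑ᶠ v ∈ compVerts G A C, f v = ∑ v ∈ (compVerts G A C).toFinset, f v := fun C => by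
    rw [finsum_mem_eq_finite_toFinset_sum _ (Set.toFinite _), Set.toFinite_toFinset]
  simp only [hterm, Set.Finite.toFinset_eq_toFinset]
  rw [← Finset.sum_biUnion]
  · congr 1
    ext v
    simp only [Finset.mem_biUnion, Finset.mem_univ, true_and, Set.mem_toFinset]
    constructor
    · rintro ⟨C, hC⟩; exact compVerts_subset G A C hC
    · intro hv; exact ⟨_, mem_compVerts_mk G A hv⟩
  · intro C _ D _ hCD
    simp only [Finset.disjoint_left, Set.mem_toFinset]
    intro v hv hv'
    exact hCD (compVerts_eq_of_mem G A hv hv')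

private lemma sum_eBetween_comps (T : Set V) (hTA : Disjoint (Aᶜ : Set V) T) :
    ∑ᶠ C : (G.induce Aᶜ).ConnectedComponent, eBetween G (compVerts G A C) T
      = eBetween G (Aᶜ) T := by
  classical
  haveI := Fintype.ofFinite ((G.induce Aᶜ).ConnectedComponent)
  rw [finsum_eq_sum_of_fintype]
  have hcard : ∀ C : (G.induce Aᶜ).ConnectedComponent,
      eBetween G (compVerts G A C) T
        = ({e ∈ G.edgeSet | ∃ u ∈ compVerts G A C, ∃ w ∈ T, e = s(u, w)}.toFinset).card :=
    fun C => Set.ncard_eq_toFinset_card' _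
  rw [eBetween, Set.ncard_eq_toFinset_card']
  simp_rw [hcard]
  rw [← Finset.card_biUnion]
  · congr 1
    ext e
    simp only [Finset.mem_biUnion, Finset.mem_univ, true_and, Set.mem_toFinset,
      Set.mem_setOf_eq]
    constructor
    · rintro ⟨C, he, u, hu, w, hw, rfl⟩
      exact ⟨he, u, compVerts_subset G A C hu, w, hw, rfl⟩
    · rintro ⟨he, u, hu, w, hw, rfl⟩
      exact ⟨_, he, u, mem_compVerts_mk G A hu, w, hw, rfl⟩
  · intro C _ D _ hCD
    simp only [Finset.disjoint_left, Set.mem_toFinset, Set.mem_setOf_eq]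
    rintro e ⟨he, u, hu, w, hw, rfl⟩ ⟨_, u', hu', w', hw', heq⟩
    rw [Sym2.eq_iff] at heq
    rcases heq with ⟨h1, _⟩ | ⟨h1, h2⟩
    · exact hCD (compVerts_eq_of_mem G A (h1 ▸ hu) hu')
    · exact Set.disjoint_left.mp hTA (compVerts_subset G A D hu') (h2 ▸ hw)

end Helpers

/-- The Lovász deficiency δ(S,T) is congruent to f(V(G)) modulo 2. -/
theorem lovasz_delta_parity {V : Type*} [Fintype V] (G : SimpleGraph V)
    (g f : V → ℕ) (hgpos : ∀ v, 1 ≤ g v) (hgf : ∀ v, g v ≤ f v)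
    (hpar : ∀ v, g v ≡ f v [MOD 2]) :
    ∀ S T : Set V, Disjoint S T →
      (∑ᶠ v ∈ S, (f v : ℤ)) + (∑ᶠ x ∈ T, (gdeg G x : ℤ))
          - (∑ᶠ v ∈ T, (g v : ℤ)) - (eBetween G S T : ℤ)
          - (tauCount G f S T : ℤ) ≡ (∑ v : V, (f v : ℤ)) [ZMOD 2] := by
  intro S T hST
  have h20 : (2 : ZMod 2) = 0 := by decide
  have hUT : Disjoint ((S ∪ T)ᶜ : Set V) T :=
    Set.disjoint_left.mpr fun v hv hvT => hv (Or.inr hvT)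
  have hUS : Disjoint ((S ∪ T)ᶜ : Set V) S :=
    Set.disjoint_left.mpr fun v hv hvS => hv (Or.inl hvS)
  refine (ZMod.intCast_eq_intCast_iff _ _ 2).mp ?_
  rw [Int.cast_sub, Int.cast_sub, Int.cast_sub, Int.cast_add,
      int_cast_finsum_mem S f, int_cast_finsum_mem T (gdeg G), int_cast_finsum_mem T g]
  push_cast
  -- the auxiliary congruences, all stated in `ZMod 2`
  have hg : (∑ᶠ v ∈ T, ((g v : ZMod 2))) = ∑ᶠ v ∈ T, ((f v : ZMod 2)) :=
    finsum_mem_congr rfl fun x _ => (ZMod.natCast_eq_natCast_iff _ _ _).mpr (hpar x)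
  have htau : ((tauCount G f S T : ℕ) : ZMod 2)
      = ((eBetween G ((S ∪ T)ᶜ) T : ℕ) : ZMod 2)
        + ∑ᶠ v ∈ ((S ∪ T)ᶜ : Set V), ((f v : ZMod 2)) := by
    unfold tauCount
    rw [card_odd_filter]
    have hterm : ∀ C : (G.induce (S ∪ T)ᶜ).ConnectedComponent,
        ((eBetween G (compVerts G (S ∪ T) C) T + ∑ᶠ v ∈ compVerts G (S ∪ T) C, f v : ℕ)
            : ZMod 2)
          = ((eBetween G (compVerts G (S ∪ T) C) T : ℕ) : ZMod 2)
            + ((∑ᶠ v ∈ compVerts G (S ∪ T) C, f v : ℕ) : ZMod 2) := fun C => by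
      push_cast; ring
    rw [finsum_congr hterm, finsum_add_distrib (Set.toFinite _) (Set.toFinite _),
        ← cast_finsum, ← cast_finsum, sum_eBetween_comps G (S ∪ T) T hUT,
        sum_compVerts_f G (S ∪ T) f, cast_finsum_mem]
  have hdeg : (∑ᶠ x ∈ T, ((gdeg G x : ZMod 2)))
      = ((eBetween G S T : ℕ) : ZMod 2) + ((eBetween G ((S ∪ T)ᶜ) T : ℕ) : ZMod 2) := by
    rw [← cast_finsum_mem T (gdeg G)]
    have h2 : ∑ᶠ x ∈ T, gdeg G x
        = {p : V × V | p.1 ∈ T ∧ p.2 ∈ T ∧ G.Adj p.1 p.2}.ncard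
          + ({p : V × V | p.1 ∈ T ∧ p.2 ∈ S ∧ G.Adj p.1 p.2}.ncard
            + {p : V × V | p.1 ∈ T ∧ p.2 ∈ (S ∪ T)ᶜ ∧ G.Adj p.1 p.2}.ncard) := by
      rw [← sum_n_eq_pairs G T T, ← sum_n_eq_pairs G T S, ← sum_n_eq_pairs G T ((S ∪ T)ᶜ),
          ← finsum_mem_add_distrib (Set.toFinite T), ← finsum_mem_add_distrib (Set.toFinite T)]
      exact finsum_mem_congr rfl fun x _ => gdeg_split G x S T hST
    rw [h2]
    push_cast
    rw [diag_zero G T, zero_add, pairs_card_eq_eBetween G hST.symm,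
        pairs_card_eq_eBetween G hUT.symm, eBetween_comm G T S, eBetween_comm G T ((S ∪ T)ᶜ)]
  have hfV : (∑ v : V, ((f v : ZMod 2)))
      = ∑ᶠ x ∈ T, ((f x : ZMod 2))
        + (∑ᶠ v ∈ S, ((f v : ZMod 2))
          + ∑ᶠ v ∈ ((S ∪ T)ᶜ : Set V), ((f v : ZMod 2))) := by
    have d1 : Disjoint T (S ∪ (S ∪ T)ᶜ) := by
      rw [Set.disjoint_union_right]
      exact ⟨hST.symm, hUT.symm⟩
    have huniv : (Set.univ : Set V) = T ∪ (S ∪ (S ∪ T)ᶜ) := by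
      ext v
      simp only [Set.mem_univ, Set.mem_union, Set.mem_compl_iff, true_iff]
      tauto
    rw [← finsum_eq_sum_of_fintype, ← finsum_mem_univ, huniv,
        finsum_mem_union d1 (Set.toFinite _) (Set.toFinite _),
        finsum_mem_union hUS.symm (Set.toFinite _) (Set.toFinite _)]
  linear_combination hdeg - hg - htau - hfV
    - (∑ᶠ x ∈ T, ((f x : ZMod 2)) + ∑ᶠ v ∈ ((S ∪ T)ᶜ : Set V), ((f v : ZMod 2))) * h20
end
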